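/- For every nonempty word w over {[, ]} and every position j (1-indexed), the value of the rule D in the Dyck C-RASP program at position j equals true if and only if the prefix a_1...a_j is a Dyck-1 word. -/

import Mathlib

/- Letters: `true` = '[' , `false` = ']'. Positions are 1-indexed;
   the prefix up to position `j` is `w.take j`. -/

def cntL (w : List Bool) (j : ℕ) : ℕ := (w.take j).count true
def cntR (w : List Bool) (j : ℕ) : ℕ := (w.take j).count false

/-- The Boolean rule `V := C_[ < C_]` at position `i`. -/
def Vrule (w : List Bool) (i : ℕ) : Bool := decide (cntL w i < cntR w i)

/-- `#V` at position `j`. -/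
def cntV (w : List Bool) (j : ℕ) : ℕ :=
  ((Finset.Icc 1 j).filter (fun i => Vrule w i = true)).card

/-- The Boolean rule `D := (#V = 0 ∧ C_[ = C_])` at position `j`. -/
def Drule (w : List Bool) (j : ℕ) : Prop := cntV w j = 0 ∧ cntL w j = cntR w j

/-- `w` is a Dyck-1 word. -/
def isDyck (w : List Bool) : Prop :=
  (∀ j ≤ w.length, cntR w j ≤ cntL w j) ∧ cntL w w.length = cntR w w.length


lemma cntL_take (w : List Bool) (j i : ℕ) : cntL (w.take j) i = cntL w (min i j) := by
  simp [cntL, List.take_take]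

lemma cntR_take (w : List Bool) (j i : ℕ) : cntR (w.take j) i = cntR w (min i j) := by
  simp [cntR, List.take_take]

theorem dyck_D_char (w : List Bool) (hw : w ≠ []) (j : ℕ)
    (hj1 : 1 ≤ j) (hjn : j ≤ w.length) :
    Drule w j ↔ isDyck (w.take j) := by
  have hlen : (w.take j).length = j := by
    simp [List.length_take]; omega
  constructor
  · rintro ⟨hV, hE⟩
    have hforall : ∀ i ≤ j, cntR w i ≤ cntL w i := by
      intro i hi
      rcases Nat.eq_zero_or_pos i with h0 | h1
      · subst h0; simp [cntL, cntR]
      · by_contra h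
        push_neg at h
        have hmem : i ∈ (Finset.Icc 1 j).filter (fun i => Vrule w i = true) := by
          rw [Finset.mem_filter, Finset.mem_Icc]
          exact ⟨⟨h1, hi⟩, by simpa [Vrule] using h⟩
        have := Finset.card_eq_zero.mp hV
        rw [this] at hmem
        simp at hmem
    constructor
    · intro i hi
      rw [hlen] at hi
      rw [cntL_take, cntR_take, min_eq_left hi]
      exact hforall i hi
    · rw [hlen, cntL_take, cntR_take, min_self]
      exact hE
  · rintro ⟨hall, hE⟩
    rw [hlen] at hall
    constructor
    · rw [cntV, Finset.card_eq_zero, Finset.filter_eq_empty_iff]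
      intro i hi
      rw [Finset.mem_Icc] at hi
      have := hall i hi.2
      rw [cntL_take, cntR_take, min_eq_left hi.2] at this
      simp [Vrule]
      omega
    · rw [hlen, cntL_take, cntR_take, min_self] at hE
      exact hE
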